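/- arXiv:cs/0302027 — 3 statements merged into one kernel-verified Lean document; each statement's English description precedes it below -/
import Mathlib

section
/- There exists a tetrahedron in R³ all of whose face angles (the angles of its four triangular faces) are acute, but which has a dihedral angle greater than or equal to π/2. -/
open Real EuclideanGeometry

/-- The dihedral angle of the tetrahedron `abcd` along the edge `ab`:
the angle between the components of `c - a` and `d - a` orthogonal to `b - a`. -/
noncomputable def dihedralAngle (a b c d : EuclideanSpace ℝ (Fin 3)) : ℝ :=
  InnerProductGeometry.angle
    ((c - a) - ((inner ℝ (c - a) (b - a) : ℝ) / (inner ℝ (b - a) (b - a) : ℝ)) • (b - a))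
    ((d - a) - ((inner ℝ (d - a) (b - a) : ℝ) / (inner ℝ (b - a) (b - a) : ℝ)) • (b - a))

lemma aux_angle_lt {V : Type*} [NormedAddCommGroup V] [InnerProductSpace ℝ V]
    {u v : V} (h : 0 < (inner ℝ u v : ℝ)) : InnerProductGeometry.angle u v < π / 2 := by
  have hu : u ≠ 0 := by rintro rfl; simp at h
  have hv : v ≠ 0 := by rintro rfl; simp at h
  rw [InnerProductGeometry.angle, Real.arccos_lt_pi_div_two]
  exact div_pos h (mul_pos (norm_pos_iff.2 hu) (norm_pos_iff.2 hv))

/-- There is a (nondegenerate) tetrahedron all of whose twelve face angles are acute,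
yet some dihedral angle is at least `π/2`. -/
theorem exists_face_acute_dihedral_nonacute_tetra :
    ∃ a b c d : EuclideanSpace ℝ (Fin 3),
      AffineIndependent ℝ ![a, b, c, d] ∧
      (∠ b a c < π / 2 ∧ ∠ a b c < π / 2 ∧ ∠ a c b < π / 2 ∧
       ∠ b a d < π / 2 ∧ ∠ a b d < π / 2 ∧ ∠ a d b < π / 2 ∧
       ∠ c a d < π / 2 ∧ ∠ a c d < π / 2 ∧ ∠ a d c < π / 2 ∧
       ∠ c b d < π / 2 ∧ ∠ b c d < π / 2 ∧ ∠ b d c < π / 2) ∧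
      (π / 2 ≤ dihedralAngle a b c d ∨ π / 2 ≤ dihedralAngle a c b d ∨
       π / 2 ≤ dihedralAngle a d b c ∨ π / 2 ≤ dihedralAngle b c a d ∨
       π / 2 ≤ dihedralAngle b d a c ∨ π / 2 ≤ dihedralAngle c d a b) := by
  refine ⟨!₂[0,0,0], !₂[2,0,0], !₂[1,1,1], !₂[1,1,-1], ?_, ?_, ?_⟩
  · rw [affineIndependent_iff_of_fintype]
    intro w hw hs
    rw [Finset.univ.weightedVSub_eq_linear_combination hw] at hs
    rw [Fin.sum_univ_four] at hs hw
    simp only [Matrix.cons_val_zero, Matrix.cons_val_one, Matrix.head_cons,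
      Matrix.cons_val_two, Matrix.cons_val_three, Matrix.tail_cons] at hs
    have h0 := congrArg (fun x => x 0) hs
    have h1 := congrArg (fun x => x 1) hs
    have h2 := congrArg (fun x => x 2) hs
    simp only [PiLp.add_apply, PiLp.smul_apply, PiLp.zero_apply, Matrix.cons_val_zero,
      Matrix.cons_val_one, Matrix.head_cons, Matrix.cons_val_two, Matrix.tail_cons,
      smul_eq_mul] at h0 h1 h2
    have e2 : w 2 = 0 := by linarith
    have e3 : w 3 = 0 := by linarith
    have e1 : w 1 = 0 := by linarith
    have e0 : w 0 = 0 := by linarith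
    intro i
    fin_cases i
    · exact e0
    · exact e1
    · exact e2
    · exact e3
  · refine ⟨?_, ?_, ?_, ?_, ?_, ?_, ?_, ?_, ?_, ?_, ?_, ?_⟩ <;>
    · apply aux_angle_lt
      norm_num [PiLp.inner_apply, Fin.sum_univ_three, vsub_eq_sub, PiLp.sub_apply,
        RCLike.inner_apply, conj_trivial, Matrix.cons_val, Matrix.cons_val_two,
        Matrix.tail_cons, Matrix.head_cons]
  · left
    have : dihedralAngle !₂[0,0,0] !₂[2,0,0] !₂[1,1,1] !₂[1,1,-1] = π / 2 := by
      rw [dihedralAngle, ← InnerProductGeometry.inner_eq_zero_iff_angle_eq_pi_div_two]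
      rw [PiLp.inner_apply, Fin.sum_univ_three]
      · norm_num [PiLp.inner_apply, Fin.sum_univ_three, PiLp.sub_apply, PiLp.smul_apply, Matrix.cons_val,
          EuclideanSpace.norm_eq, Real.sq_sqrt, Matrix.cons_val_two, Matrix.tail_cons, Matrix.head_cons]
    rw [this]
end

section
/- Let ε > 0 be sufficiently small, and define a = (−ε,−ε,−ε), b = (1,0,0), c = (0,1,0), d = (0,0,1), e = (2/3+ε, 2/3+ε, 2/3+ε) in R³. Then both tetrahedra abcd and bcde have all six dihedral angles strictly less than π/2. -/
open Real EuclideanGeometry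

/-- A point of `ℝ³` given by its three coordinates. -/
noncomputable def pt (x y z : ℝ) : EuclideanSpace ℝ (Fin 3) :=
  (WithLp.equiv 2 (Fin 3 → ℝ)).symm ![x, y, z]

/-- A tetrahedron is acute if all six of its dihedral angles are strictly less than `π/2`. -/
def IsAcuteTetra (a b c d : EuclideanSpace ℝ (Fin 3)) : Prop :=
  dihedralAngle a b c d < π / 2 ∧ dihedralAngle a c b d < π / 2 ∧
  dihedralAngle a d b c < π / 2 ∧ dihedralAngle b c a d < π / 2 ∧
  dihedralAngle b d a c < π / 2 ∧ dihedralAngle c d a b < π / 2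

lemma angle_lt_pi_div_two_of_inner_pos {V : Type*} [NormedAddCommGroup V]
    [InnerProductSpace ℝ V] {x y : V} (h : 0 < (inner ℝ x y : ℝ)) :
    InnerProductGeometry.angle x y < π / 2 := by
  have hx : x ≠ 0 := by rintro rfl; simp at h
  have hy : y ≠ 0 := by rintro rfl; simp at h
  rw [InnerProductGeometry.angle, Real.arccos_lt_pi_div_two]
  exact div_pos h (mul_pos (norm_pos_iff.mpr hx) (norm_pos_iff.mpr hy))

lemma dihedral_lt {a b c d : EuclideanSpace ℝ (Fin 3)}
    (hw : 0 < (inner ℝ (b - a) (b - a) : ℝ))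
    (h : (inner ℝ (c - a) (b - a) : ℝ) * (inner ℝ (d - a) (b - a) : ℝ) <
      (inner ℝ (c - a) (d - a) : ℝ) * (inner ℝ (b - a) (b - a) : ℝ)) :
    dihedralAngle a b c d < π / 2 := by
  set u := c - a
  set v := d - a
  set w := b - a
  have hne : (inner ℝ w w : ℝ) ≠ 0 := ne_of_gt hw
  apply angle_lt_pi_div_two_of_inner_pos
  have expand : (inner ℝ (u - ((inner ℝ u w : ℝ) / (inner ℝ w w : ℝ)) • w)
      (v - ((inner ℝ v w : ℝ) / (inner ℝ w w : ℝ)) • w) : ℝ)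
      = (inner ℝ u v : ℝ) - (inner ℝ u w : ℝ) * (inner ℝ v w : ℝ) / (inner ℝ w w : ℝ) := by
    simp only [inner_sub_left, inner_sub_right, real_inner_smul_left, real_inner_smul_right]
    rw [real_inner_comm v w]
    set p : ℝ := inner ℝ u v
    set q : ℝ := inner ℝ u w
    set r : ℝ := inner ℝ v w
    set t : ℝ := inner ℝ w w
    field_simp
    ring
  rw [expand, sub_pos, div_lt_iff₀ hw]
  exact h

lemma inner_pt (x y z a b c : ℝ) :
    (inner ℝ (pt x y z) (pt a b c) : ℝ) = x * a + y * b + z * c := by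
  simp [pt, PiLp.inner_apply, Fin.sum_univ_three]
  ring

lemma pt_sub (x y z a b c : ℝ) :
    pt x y z - pt a b c = pt (x - a) (y - b) (z - c) := by
  ext i
  fin_cases i <;> simp [pt]

/-- For all sufficiently small `ε > 0`, both tetrahedra `abcd` and `bcde`, where
`a = (−ε,−ε,−ε)`, `b = (1,0,0)`, `c = (0,1,0)`, `d = (0,0,1)`,
`e = (2/3+ε, 2/3+ε, 2/3+ε)`, are acute. -/
theorem two_acute_tetrahedra :
    ∃ ε₀ : ℝ, 0 < ε₀ ∧ ∀ ε : ℝ, 0 < ε → ε < ε₀ →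
      IsAcuteTetra (pt (-ε) (-ε) (-ε)) (pt 1 0 0) (pt 0 1 0) (pt 0 0 1) ∧
      IsAcuteTetra (pt 1 0 0) (pt 0 1 0) (pt 0 0 1)
        (pt (2/3 + ε) (2/3 + ε) (2/3 + ε)) := by
  refine ⟨1, one_pos, fun ε hε _ => ?_⟩
  constructor <;>
  · refine ⟨?_, ?_, ?_, ?_, ?_, ?_⟩ <;>
    · apply dihedral_lt <;>
      · simp only [pt_sub, inner_pt]
        nlinarith [sq_nonneg ε, mul_pos hε hε]
end

section
/- The three tetrahedra abce, acde, abde, where a = (0,0,0), b = (1,0,0), c = (0,1,0), d = (0,0,1), e = (2/3,2/3,2/3), each have a dihedral angle of exactly 2π/3 along the common edge ae; in particular each is obtuse. -/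
open Real EuclideanGeometry

lemma inner_pt_s14 (x1 y1 z1 x2 y2 z2 : ℝ) :
    (inner ℝ (pt x1 y1 z1) (pt x2 y2 z2) : ℝ) = x1*x2 + y1*y2 + z1*z2 := by
  simp [pt, PiLp.inner_apply, Fin.sum_univ_three]
  ring

lemma pt_sub_s14 (x1 y1 z1 x2 y2 z2 : ℝ) :
    pt x1 y1 z1 - pt x2 y2 z2 = pt (x1-x2) (y1-y2) (z1-z2) := by
  ext i
  fin_cases i <;> simp [pt]

lemma pt_smul (r x y z : ℝ) : r • pt x y z = pt (r*x) (r*y) (r*z) := by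
  ext i
  fin_cases i <;> simp [pt]

lemma angle_pt (u v : EuclideanSpace ℝ (Fin 3))
    (h1 : (inner ℝ u v : ℝ) = -1/3) (h2 : (inner ℝ u u : ℝ) = 2/3) (h3 : (inner ℝ v v : ℝ) = 2/3) :
    InnerProductGeometry.angle u v = 2 * π / 3 := by
  have hn : ‖u‖ * ‖v‖ = 2/3 := by
    have h2' : ‖u‖ ^ 2 = 2/3 := by rw [← real_inner_self_eq_norm_sq]; exact h2
    have h3' : ‖v‖ ^ 2 = 2/3 := by rw [← real_inner_self_eq_norm_sq]; exact h3
    nlinarith [norm_nonneg u, norm_nonneg v, mul_nonneg (norm_nonneg u) (norm_nonneg v)]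
  rw [InnerProductGeometry.angle, h1, hn]
  rw [show (-1/3 : ℝ) / (2/3) = -(1/2) by norm_num]
  rw [Real.arccos_neg, ← Real.cos_pi_div_three,
    Real.arccos_cos (by positivity) (by linarith [Real.pi_pos])]
  ring

/-- With `a = (0,0,0)`, `b = (1,0,0)`, `c = (0,1,0)`, `d = (0,0,1)`, `e = (2/3,2/3,2/3)`,
each of the three tetrahedra `abce`, `acde`, `abde` has dihedral angle exactly `2π/3`
along the common edge `ae`; in particular each is obtuse, since `2π/3 > π/2`. -/
theorem delaunay_tetrahedra_obtuse_along_ae :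
    dihedralAngle (pt 0 0 0) (pt (2/3) (2/3) (2/3)) (pt 1 0 0) (pt 0 1 0) = 2 * π / 3 ∧
    dihedralAngle (pt 0 0 0) (pt (2/3) (2/3) (2/3)) (pt 0 1 0) (pt 0 0 1) = 2 * π / 3 ∧
    dihedralAngle (pt 0 0 0) (pt (2/3) (2/3) (2/3)) (pt 1 0 0) (pt 0 0 1) = 2 * π / 3 ∧
    π / 2 < 2 * π / 3 := by
  refine ⟨?_, ?_, ?_, by linarith [Real.pi_pos]⟩ <;>
  · rw [dihedralAngle]
    apply angle_pt <;> simp only [pt_sub_s14, inner_pt_s14, pt_smul] <;> norm_num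
end
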